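/- For every integer m ≥ 0, every pair of linear maps (g_0, g_1) ∈ End(ℂ^m) × End(ℂ^{m+1}) satisfying g_0∘P_1 = P_1∘g_1 and g_0∘P_2 = P_2∘g_1 is of the form g_0 = λ·id_{ℂ^m}, g_1 = λ·id_{ℂ^{m+1}} for some λ ∈ ℂ. Equivalently, the endomorphism algebra of the ADHM representation C_m is ℂ·id. -/

import Mathlib

/-- `P1 : ℂ^{m+1} → ℂ^m`, `(x₁, …, x_{m+1}) ↦ (x₁, …, x_m)`. -/
def P1 (m : ℕ) : (Fin (m + 1) → ℂ) →ₗ[ℂ] (Fin m → ℂ) :=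
  LinearMap.funLeft ℂ ℂ Fin.castSucc

/-- `P2 : ℂ^{m+1} → ℂ^m`, `(x₁, …, x_{m+1}) ↦ (x₂, …, x_{m+1})`. -/
def P2 (m : ℕ) : (Fin (m + 1) → ℂ) →ₗ[ℂ] (Fin m → ℂ) :=
  LinearMap.funLeft ℂ ℂ Fin.succ

/-- The ADHM representation `C_m` (with `V0 = ℂ^m`, `V1 = ℂ^{m+1}`, `B1 = P1`, `B2 = P2`)
is simple: every pair of endomorphisms intertwining `P1` and `P2` is a scalar multiple of
the identity. -/
theorem Cm_endomorphisms_are_scalars (m : ℕ)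
    (g0 : Module.End ℂ (Fin m → ℂ)) (g1 : Module.End ℂ (Fin (m + 1) → ℂ))
    (h1 : g0 ∘ₗ P1 m = P1 m ∘ₗ g1) (h2 : g0 ∘ₗ P2 m = P2 m ∘ₗ g1) :
    ∃ lam : ℂ, g0 = lam • LinearMap.id ∧ g1 = lam • LinearMap.id := by
  set a : Fin (m+1) → Fin (m+1) → ℂ := fun i j => g1 (Pi.single j 1) i with ha
  set b : Fin m → Fin m → ℂ := fun i j => g0 (Pi.single j 1) i with hb
  have key1 : ∀ (x : Fin (m+1) → ℂ) (i : Fin m),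
      g0 (fun k => x k.castSucc) i = g1 x i.castSucc := by
    intro x i
    have := congrFun (LinearMap.congr_fun h1 x) i
    exact this
  have key2 : ∀ (x : Fin (m+1) → ℂ) (i : Fin m),
      g0 (fun k => x k.succ) i = g1 x i.succ := by
    intro x i
    have := congrFun (LinearMap.congr_fun h2 x) i
    exact this
  have b1 : ∀ i j : Fin m, b i j = a i.castSucc j.castSucc := by
    intro i j
    have := key1 (Pi.single j.castSucc 1) i
    have hx : (fun k : Fin m => (Pi.single j.castSucc 1 : Fin (m+1) → ℂ) k.castSucc)
        = Pi.single j 1 := by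
      funext k
      simp [Pi.single_apply, Fin.castSucc_inj]
    rw [hx] at this
    exact this
  have b2 : ∀ i j : Fin m, b i j = a i.succ j.succ := by
    intro i j
    have := key2 (Pi.single j.succ 1) i
    have hx : (fun k : Fin m => (Pi.single j.succ 1 : Fin (m+1) → ℂ) k.succ)
        = Pi.single j 1 := by
      funext k
      simp [Pi.single_apply, Fin.succ_inj]
    rw [hx] at this
    exact this
  have shift : ∀ i j : Fin m, a i.castSucc j.castSucc = a i.succ j.succ := by
    intro i j; rw [← b1, b2]
  have zero1 : ∀ i : Fin m, a i.castSucc (Fin.last m) = 0 := by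
    intro i
    have key := key1 (Pi.single (Fin.last m) 1) i
    have hx : (fun k : Fin m => (Pi.single (Fin.last m) 1 : Fin (m+1) → ℂ) k.castSucc)
        = 0 := by
      funext k
      simp [Pi.single_apply, Fin.ne_of_lt (Fin.castSucc_lt_last k)]
    rw [hx] at key
    show g1 (Pi.single (Fin.last m) 1) i.castSucc = 0
    rw [← key, map_zero]
    rfl
  have zero2 : ∀ i : Fin m, a i.succ 0 = 0 := by
    intro i
    have key := key2 (Pi.single (0 : Fin (m+1)) 1) i
    have hx : (fun k : Fin m => (Pi.single (0 : Fin (m+1)) 1 : Fin (m+1) → ℂ) k.succ)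
        = 0 := by
      funext k
      simp [Pi.single_apply, (Fin.succ_ne_zero k)]
    rw [hx] at key
    show g1 (Pi.single (0 : Fin (m+1)) 1) i.succ = 0
    rw [← key, map_zero]
    rfl
  set lam : ℂ := a 0 0 with hlam
  have diag : ∀ (n : ℕ) (i : Fin (m+1)), (i : ℕ) = n → a i i = lam := by
    intro n
    induction n with
    | zero =>
      intro i hi
      have : i = 0 := Fin.ext hi
      rw [this]
    | succ n ih =>
      intro i hi
      obtain ⟨i', rfl⟩ := Fin.exists_succ_eq_of_ne_zero
        (show i ≠ 0 by intro h; rw [h] at hi; simp at hi)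
      rw [← shift]
      exact ih i'.castSucc (by simpa using Nat.succ_injective hi)
  have upper : ∀ (n : ℕ) (i j : Fin (m+1)), m - (j : ℕ) = n → (i : ℕ) < (j : ℕ) →
      a i j = 0 := by
    intro n
    induction n with
    | zero =>
      intro i j hj hij
      have hjm : j = Fin.last m := by
        apply Fin.ext
        simp only [Fin.val_last]
        omega
      subst hjm
      obtain ⟨i', rfl⟩ := Fin.exists_castSucc_eq.mpr
        (show i ≠ Fin.last m by intro h; rw [h] at hij; exact lt_irrefl _ hij)
      exact zero1 i'
    | succ n ih =>
      intro i j hj hij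
      obtain ⟨j', rfl⟩ := Fin.exists_castSucc_eq.mpr
        (show j ≠ Fin.last m by intro h; rw [h] at hj; simp at hj)
      obtain ⟨i', rfl⟩ := Fin.exists_castSucc_eq.mpr
        (show i ≠ Fin.last m by
          intro h
          rw [h] at hij
          have := j'.castSucc.isLt
          simp [Fin.val_last] at hij
          omega)
      rw [shift]
      refine ih i'.succ j'.succ ?_ ?_
      · simp only [Fin.val_succ]
        simp only [Fin.coe_castSucc] at hj
        omega
      · simpa using hij
  have lower : ∀ (n : ℕ) (i j : Fin (m+1)), (j : ℕ) = n → (j : ℕ) < (i : ℕ) →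
      a i j = 0 := by
    intro n
    induction n with
    | zero =>
      intro i j hj hij
      have hj0 : j = 0 := Fin.ext hj
      subst hj0
      obtain ⟨i', rfl⟩ := Fin.exists_succ_eq_of_ne_zero
        (show i ≠ 0 by intro h; rw [h] at hij; exact lt_irrefl _ hij)
      exact zero2 i'
    | succ n ih =>
      intro i j hj hij
      obtain ⟨j', rfl⟩ := Fin.exists_succ_eq_of_ne_zero
        (show j ≠ 0 by intro h; rw [h] at hj; simp at hj)
      obtain ⟨i', rfl⟩ := Fin.exists_succ_eq_of_ne_zero
        (show i ≠ 0 by intro h; rw [h] at hij; simp at hij)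
      rw [← shift]
      refine ih i'.castSucc j'.castSucc ?_ ?_
      · simpa using Nat.succ_injective hj
      · simpa using hij
  have a_eq : ∀ i j : Fin (m+1), a i j = if i = j then lam else 0 := by
    intro i j
    rcases lt_trichotomy (i : ℕ) (j : ℕ) with h | h | h
    · rw [if_neg (fun e => by simp [e] at h), upper (m - j) i j rfl h]
    · have hij : i = j := Fin.ext h
      subst hij
      rw [if_pos rfl, diag i i rfl]
    · rw [if_neg (fun e => by simp [e] at h), lower j i j rfl h]
  refine ⟨lam, ?_, ?_⟩
  · apply LinearMap.toMatrix'.injective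
    ext i j
    rw [LinearMap.toMatrix'_apply, LinearMap.toMatrix'_apply]
    have hsingle : (fun j' : Fin m => if j' = j then (1:ℂ) else 0) = Pi.single j 1 := by
      funext k; simp [Pi.single_apply]
    have hbij : b i j = if i = j then lam else 0 := by
      rw [b1 i j, a_eq i.castSucc j.castSucc]
      simp [Fin.castSucc_inj]
    refine Eq.trans hbij ?_
    simp [Pi.single_apply, eq_comm]
  · apply LinearMap.toMatrix'.injective
    ext i j
    rw [LinearMap.toMatrix'_apply, LinearMap.toMatrix'_apply]
    have hsingle : (fun j' : Fin (m+1) => if j' = j then (1:ℂ) else 0) = Pi.single j 1 := by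
      funext k; simp [Pi.single_apply]
    refine Eq.trans (a_eq i j) ?_
    simp [Pi.single_apply, eq_comm]
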